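/- Detailed balance of the informed proposal weights: for all states x, y ∈ 𝒯, p(x)·η(y|x) = p(y)·η(x|y), where η(y|x) = q(y|x)·h( p(y)q(x|y) / (p(x)q(y|x)) ) if q(y|x) > 0 and η(y|x) = 0 otherwise. -/

import Mathlib

/-- Detailed balance of the informed proposal weights `η` with respect to the target `p`.
Here `q x y` denotes the uninformed proposal probability `q(y|x)` and
`η x y` denotes the informed weight `η(y|x)`. -/
theorem informed_proposal_detailed_balance
    {𝒯 : Type*} [Fintype 𝒯]
    (p : 𝒯 → ℝ) (hp : ∀ x, 0 < p x)
    (q : 𝒯 → 𝒯 → ℝ) (hq0 : ∀ x y, 0 ≤ q x y)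
    (hqsym : ∀ x y, 0 < q x y ↔ 0 < q y x)
    (h : ℝ → ℝ) (hbal : ∀ t : ℝ, 0 < t → h t = t * h (1 / t))
    (η : 𝒯 → 𝒯 → ℝ)
    (hη : ∀ x y, η x y =
      if 0 < q x y then q x y * h (p y * q y x / (p x * q x y)) else 0) :
    ∀ x y : 𝒯, p x * η x y = p y * η y x := by
  intro x y
  rw [hη x y, hη y x]
  by_cases hxy : 0 < q x y
  · have hyx : 0 < q y x := (hqsym x y).mp hxy
    rw [if_pos hxy, if_pos hyx]
    set t : ℝ := p y * q y x / (p x * q x y) with ht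
    have hden : 0 < p x * q x y := mul_pos (hp x) hxy
    have hnum : 0 < p y * q y x := mul_pos (hp y) hyx
    have htpos : 0 < t := div_pos hnum hden
    have hinv : 1 / t = p x * q x y / (p y * q y x) := by
      rw [ht, one_div_div]
    have := hbal t htpos
    rw [hinv] at this
    rw [this, ht]
    field_simp [(hp x).ne', (hp y).ne']
  · have hyx : ¬ 0 < q y x := fun hh => hxy ((hqsym x y).mpr hh)
    rw [if_neg hxy, if_neg hyx, mul_zero, mul_zero]
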